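/- Let d ≥ 1, m = 2^d, and let p̃ be the probability vector with p̃_1 = ⋯ = p̃_{m−1} = 1/(3(m−1)) and p̃_m = 2/3 assigned to the symbols of {0,1}^d. Then for every bijection g : {0,1}^d → {0,1}^d, writing Y = g(X), one has Σ_{j=1}^d H_b(Y_j) ≥ d · h_b(m/(6(m−1))); that is, the assignment of symbols in increasing binary order to p̃ listed in ascending order minimizes the sum of marginal bit entropies over all bijections. -/

import Mathlib

open Finset

/-- The binary entropy function `h_b(x) = -x log₂ x - (1-x) log₂ (1-x)`
(with the convention `0 log₂ 0 = 0`, which `Real.logb` satisfies). -/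
noncomputable def binEnt (x : ℝ) : ℝ :=
  -(x * Real.logb 2 x) - (1 - x) * Real.logb 2 (1 - x)

lemma binEnt_one_sub (x : ℝ) : binEnt (1 - x) = binEnt x := by
  unfold binEnt
  rw [sub_sub_cancel]
  ring

/-- For the probability vector `p̃` with `m-1` entries `1/(3(m-1))` and one
entry `2/3` on the symbols of `{0,1}^d` (identified with `Fin (2^d)`, bit `j` of symbol `y`
being `Nat.testBit y j`), every bijection `g` of the alphabet satisfies
`Σ_j h_b(P(Y_j = 0)) ≥ d · h_b(m/(6(m-1)))`, where `Y = g(X)` and `P(Y_j = 0)` is the sum of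
the probabilities of the symbols mapped by `g` to words whose `j`-th bit is `0`. -/
theorem order_perm_minimizes_on_example (d : ℕ) (hd : 1 ≤ d)
    (m : ℕ) (hm : m = 2 ^ d)
    (p : Fin m → ℝ)
    (hp : ∀ i : Fin m, p i = if (i : ℕ) = m - 1 then 2 / 3 else 1 / (3 * ((m : ℝ) - 1)))
    (g : Equiv.Perm (Fin m)) :
    ∑ j : Fin d,
        binEnt (∑ i ∈ Finset.univ.filter
          (fun i : Fin m => Nat.testBit ((g i : Fin m) : ℕ) (j : ℕ) = false), p i)
      ≥ (d : ℝ) * binEnt ((m : ℝ) / (6 * ((m : ℝ) - 1))) := by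
  have hm2 : 2 ≤ m := by
    subst hm
    calc 2 = 2 ^ 1 := rfl
    _ ≤ 2 ^ d := Nat.pow_le_pow_right (by norm_num) hd
  have hm2R : (2 : ℝ) ≤ (m : ℝ) := by exact_mod_cast hm2
  have hmne : (m : ℝ) - 1 ≠ 0 := by linarith
  set q : ℝ := (m : ℝ) / (6 * ((m : ℝ) - 1)) with hqdef
  set c : ℝ := 1 / (3 * ((m : ℝ) - 1)) with hcdef
  have hheavy : m - 1 < m := Nat.sub_lt (by omega) one_pos
  set a : Fin m := ⟨m - 1, hheavy⟩ with hadef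
  -- general formula for the sum of p over any subset
  have hsum : ∀ U : Finset (Fin m),
      ∑ i ∈ U, p i = (U.card : ℝ) * c + (if a ∈ U then 2 / 3 - c else 0) := by
    intro U
    have hpi : ∀ i : Fin m, p i = c + (if i = a then 2 / 3 - c else 0) := by
      intro i
      rw [hp i]
      by_cases h : (i : ℕ) = m - 1
      · have : i = a := Fin.ext h
        simp [h, this, hadef]
      · have hia : i ≠ a := fun he => h (by rw [he])
        simp [h, hia]
    simp_rw [hpi]
    rw [Finset.sum_add_distrib, Finset.sum_const, Finset.sum_ite_eq' U a]
    ring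
  have key : ∀ j : Fin d,
      binEnt (∑ i ∈ Finset.univ.filter
        (fun i : Fin m => Nat.testBit ((g i : Fin m) : ℕ) (j : ℕ) = false), p i) = binEnt q := by
    intro j
    set S := Finset.univ.filter
      (fun i : Fin m => Nat.testBit ((g i : Fin m) : ℕ) (j : ℕ) = false) with hSdef
    set T := Finset.univ.filter
      (fun i : Fin m => ¬ (Nat.testBit ((g i : Fin m) : ℕ) (j : ℕ) = false)) with hTdef
    have hST : S.card + T.card = m := by
      rw [hSdef, hTdef, Finset.card_filter_add_card_filter_not]
      simp
    have hj : (j : ℕ) < d := j.isLt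
    have hbit : 2 ^ (j : ℕ) < m := by
      rw [hm]; exact Nat.pow_lt_pow_right (by norm_num) hj
    -- the xor involution
    have hxlt : ∀ i : Fin m, ((g i : Fin m) : ℕ) ^^^ 2 ^ (j : ℕ) < m := by
      intro i
      have h1 : ((g i : Fin m) : ℕ) < 2 ^ d := by have := (g i).isLt; omega
      have h2 : 2 ^ (j : ℕ) < 2 ^ d := by omega
      have := Nat.xor_lt_two_pow h1 h2
      omega
    set f : Fin m → Fin m := fun i => g.symm ⟨((g i : Fin m) : ℕ) ^^^ 2 ^ (j : ℕ), hxlt i⟩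
      with hfdef
    have hgf : ∀ i : Fin m, ((g (f i) : Fin m) : ℕ) = ((g i : Fin m) : ℕ) ^^^ 2 ^ (j : ℕ) := by
      intro i; simp [hfdef]
    have htb : ∀ i : Fin m,
        Nat.testBit ((g (f i) : Fin m) : ℕ) (j : ℕ) = ! Nat.testBit ((g i : Fin m) : ℕ) (j : ℕ) := by
      intro i
      rw [hgf i, Nat.testBit_xor, Nat.testBit_two_pow_self]
      simp
    have hff : ∀ i : Fin m, f (f i) = i := by
      intro i
      apply g.injective
      apply Fin.ext
      rw [hgf (f i), hgf i, Nat.xor_assoc, Nat.xor_self, Nat.xor_zero]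
    have hTS : T.card = S.card := by
      apply Finset.card_bij' (fun i _ => f i) (fun i _ => f i)
      · intro i hi
        simp only [hSdef, Finset.mem_filter, Finset.mem_univ, true_and]
        rw [htb i]
        simp only [hTdef, Finset.mem_filter, Finset.mem_univ, true_and] at hi
        simp [Bool.not_eq_false] at hi ⊢
        exact hi
      · intro i hi
        simp only [hTdef, Finset.mem_filter, Finset.mem_univ, true_and]
        rw [htb i]
        simp only [hSdef, Finset.mem_filter, Finset.mem_univ, true_and] at hi
        simp [hi]
      · intro i _; exact hff i
      · intro i _; exact hff i
    have hScard : (S.card : ℝ) = (m : ℝ) / 2 := by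
      have : 2 * S.card = m := by omega
      have : (2 : ℝ) * (S.card : ℝ) = (m : ℝ) := by exact_mod_cast this
      linarith
    by_cases ha : a ∈ S
    · -- the heavy symbol is in S; sum = 1 - q
      have hsv : ∑ i ∈ S, p i = 1 - q := by
        rw [hsum S, if_pos ha, hScard, hqdef, hcdef]
        field_simp
        ring
      rw [hsv, binEnt_one_sub]
    · have hsv : ∑ i ∈ S, p i = q := by
        rw [hsum S, if_neg ha, hScard, hqdef, hcdef]
        field_simp
        ring
      rw [hsv]
  have : ∑ j : Fin d,
      binEnt (∑ i ∈ Finset.univ.filter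
        (fun i : Fin m => Nat.testBit ((g i : Fin m) : ℕ) (j : ℕ) = false), p i)
      = (d : ℝ) * binEnt q := by
    rw [Finset.sum_congr rfl (fun j _ => key j), Finset.sum_const, Finset.card_univ,
      Fintype.card_fin, nsmul_eq_mul]
  rw [this]
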